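/- Let M be a loopless matroid on a finite nonempty ground set E with rank function rk (so rk S ≥ 1 for every nonempty S ⊆ E). Set m = max{ |S| / rk(S) : ∅ ≠ S ⊆ E }. If S and T are nonempty subsets of E with |S| / rk(S) = m and |T| / rk(T) = m, then |S ∪ T| / rk(S ∪ T) = m. Consequently, the collection of subsets attaining the maximum m has a (unique) maximal element under inclusion. -/

import Mathlib

/-- Lemma 3.4: for a loopless matroid with rank function `rk` on a finite nonempty ground set,
if `m = max{|S|/rk S : S ≠ ∅}`, then the collection of subsets attaining the maximum is closed
under unions; consequently it has a (unique) maximal element under inclusion. -/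
theorem stmt_5 {α : Type*} [Fintype α] [DecidableEq α] [Nonempty α]
    (rk : Finset α → ℕ)
    (h0 : rk ∅ = 0)
    (hmono : ∀ S T : Finset α, S ⊆ T → rk S ≤ rk T)
    (hsub : ∀ S T : Finset α, rk (S ∪ T) + rk (S ∩ T) ≤ rk S + rk T)
    (hunit : ∀ (S : Finset α) (e : α), rk (insert e S) ≤ rk S + 1)
    (hloopless : ∀ e : α, rk {e} = 1)
    (m : ℝ)
    (hm : IsGreatest {r : ℝ | ∃ S : Finset α, S.Nonempty ∧ r = (S.card : ℝ) / (rk S : ℝ)} m) :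
    (∀ S T : Finset α, S.Nonempty → T.Nonempty →
        (S.card : ℝ) / (rk S : ℝ) = m → (T.card : ℝ) / (rk T : ℝ) = m →
        ((S ∪ T).card : ℝ) / (rk (S ∪ T) : ℝ) = m) ∧
      ∃ T₀ : Finset α, T₀.Nonempty ∧ (T₀.card : ℝ) / (rk T₀ : ℝ) = m ∧
        ∀ S : Finset α, S.Nonempty → (S.card : ℝ) / (rk S : ℝ) = m → S ⊆ T₀ := by
  classical
  -- positivity of rank on nonempty sets
  have hrkpos : ∀ S : Finset α, S.Nonempty → 0 < rk S := by
    intro S hS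
    obtain ⟨e, he⟩ := hS
    have h1 : rk {e} ≤ rk S := hmono _ _ (Finset.singleton_subset_iff.mpr he)
    rw [hloopless e] at h1; omega
  have hrkpos' : ∀ S : Finset α, S.Nonempty → (0:ℝ) < (rk S : ℝ) := fun S hS => by
    exact_mod_cast hrkpos S hS
  -- upper bound: card S ≤ m * rk S for nonempty S
  have hub : ∀ S : Finset α, S.Nonempty → (S.card : ℝ) ≤ m * (rk S : ℝ) := by
    intro S hS
    have h1 : (S.card : ℝ) / (rk S : ℝ) ≤ m := hm.2 ⟨S, hS, rfl⟩
    have h2 := hrkpos' S hS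
    calc (S.card : ℝ) = (S.card : ℝ) / (rk S : ℝ) * (rk S : ℝ) := by field_simp
    _ ≤ m * (rk S : ℝ) := by nlinarith
  have hmnn : 0 ≤ m := by
    obtain ⟨S, hS, hSm⟩ := hm.1
    have := hrkpos' S hS
    rw [hSm]; positivity
  -- key claim
  have key : ∀ S T : Finset α, S.Nonempty → T.Nonempty →
      (S.card : ℝ) / (rk S : ℝ) = m → (T.card : ℝ) / (rk T : ℝ) = m →
      ((S ∪ T).card : ℝ) / (rk (S ∪ T) : ℝ) = m := by
    intro S T hS hT hSm hTm
    have hSpos := hrkpos' S hS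
    have hTpos := hrkpos' T hT
    have hU : (S ∪ T).Nonempty := hS.mono Finset.subset_union_left
    have hUpos := hrkpos' _ hU
    have hScard : (S.card : ℝ) = m * (rk S : ℝ) := by
      field_simp at hSm; linarith [hSm]
    have hTcard : (T.card : ℝ) = m * (rk T : ℝ) := by
      field_simp at hTm; linarith [hTm]
    have hcardsum : ((S ∪ T).card : ℝ) + ((S ∩ T).card : ℝ)
        = (S.card : ℝ) + (T.card : ℝ) := by
      have := Finset.card_union_add_card_inter S T
      exact_mod_cast congrArg (Nat.cast : ℕ → ℝ) this
    have hsub' : ((rk (S ∪ T) : ℝ) + (rk (S ∩ T) : ℝ)) ≤ (rk S : ℝ) + (rk T : ℝ) := by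
      exact_mod_cast hsub S T
    have hIub : ((S ∩ T).card : ℝ) ≤ m * (rk (S ∩ T) : ℝ) := by
      rcases (S ∩ T).eq_empty_or_nonempty with h | h
      · simp [h, h0]
      · exact hub _ h
    have hUub : ((S ∪ T).card : ℝ) ≤ m * (rk (S ∪ T) : ℝ) := hub _ hU
    have hUlb : m * (rk (S ∪ T) : ℝ) ≤ ((S ∪ T).card : ℝ) := by nlinarith
    have : ((S ∪ T).card : ℝ) = m * (rk (S ∪ T) : ℝ) := le_antisymm hUub hUlb
    rw [this]; field_simp
  refine ⟨key, ?_⟩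
  obtain ⟨S₀, hS₀, hS₀m⟩ := hm.1
  -- family of attaining sets
  set P : Finset α → Prop := fun S => S.Nonempty ∧ (S.card : ℝ) / (rk S : ℝ) = m with hP
  have hPunion : ∀ S T, P S → P T → P (S ∪ T) := by
    intro S T ⟨h1, h2⟩ ⟨h3, h4⟩
    exact ⟨h1.mono Finset.subset_union_left, key S T h1 h3 h2 h4⟩
  have hsup : ∀ B : Finset (Finset α), B.Nonempty → (∀ S ∈ B, P S) → P (B.sup id) := by
    intro B
    induction B using Finset.induction_on with
    | empty => intro h; exact absurd h (by simp)
    | insert a B hnotmem ih =>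
      intro _ hall
      rcases B.eq_empty_or_nonempty with rfl | hBne
      · simpa using hall a (by simp)
      · have h1 : P a := hall a (by simp)
        have h2 : P (B.sup id) := ih hBne (fun S hS => hall S (by simp [hS]))
        have : (insert a B).sup id = a ∪ B.sup id := by
          simp [Finset.sup_insert, Finset.sup_eq_union]
        rw [this]
        exact hPunion _ _ h1 h2
  set A : Finset (Finset α) := Finset.univ.filter fun S => P S with hA
  have hAne : A.Nonempty := ⟨S₀, by simp [hA, P, hS₀, hS₀m.symm]⟩
  have hAmem : ∀ S ∈ A, P S := fun S hS => (Finset.mem_filter.mp hS).2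
  have hT₀ : P (A.sup id) := hsup A hAne hAmem
  refine ⟨A.sup id, hT₀.1, hT₀.2, ?_⟩
  intro S hSne hSm
  have : S ∈ A := by simp [hA, P, hSne, hSm]
  exact Finset.le_sup (f := id) this
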